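/- arXiv:0901.1518 — 4 statements merged into one kernel-verified Lean document; each statement's English description precedes it below -/
import Mathlib

section
/- Let γ > 0, τ < 0, and let δ: ℝ → ℝ tend to 0 at infinity. Then, uniformly in y ≥ 1, [y{1 + δ(u) - δ(u) y^τ}]^{-1/γ} = y^{-1/γ}{1 - γ^{-1} δ(u)(1 - y^τ)} + o(|δ(u)|) as u → ∞; i.e., sup_{y ≥ 1} |[y{1 + δ(u) - δ(u) y^τ}]^{-1/γ} - y^{-1/γ}{1 - γ^{-1} δ(u)(1 - y^τ)}| = o(|δ(u)|) as u → ∞. -/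
open Real Filter

/-- Uniformly in y ≥ 1, [y{1 + δ(u) - δ(u)y^τ}]^{-1/γ}
= y^{-1/γ}{1 - γ⁻¹δ(u)(1 - y^τ)} + o(|δ(u)|) as u → ∞. -/
theorem epd_expansion (γ τ : ℝ) (hγ : 0 < γ) (hτ : τ < 0) (δ : ℝ → ℝ)
    (hδ : Tendsto δ atTop (nhds 0)) :
    ∀ ε > 0, ∀ᶠ u in atTop, ∀ y : ℝ, 1 ≤ y →
      |(y * (1 + δ u - δ u * y ^ τ)) ^ (-1 / γ) -
        y ^ (-1 / γ) * (1 - γ⁻¹ * δ u * (1 - y ^ τ))| ≤ ε * |δ u| := by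
  intro ε hε
  -- derivative of (1+x)^(-1/γ) at 0 is -1/γ
  have h2 : HasDerivAt (fun x : ℝ => 1 + x) 1 0 := by
    simpa using (hasDerivAt_id (0 : ℝ)).const_add 1
  have h1 : HasDerivAt (fun x : ℝ => (1 + x) ^ (-1 / γ)) (-1 / γ) 0 := by
    have h3 := h2.rpow_const (p := -1 / γ) (by norm_num)
    simpa using h3
  rw [hasDerivAt_iff_isLittleO] at h1
  have h5 := (Asymptotics.isLittleO_iff.mp h1) hε
  simp only [sub_zero, smul_eq_mul, Real.norm_eq_abs, add_zero, Real.one_rpow] at h5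
  obtain ⟨r, hr, hball⟩ := Metric.eventually_nhds_iff.mp h5
  have hδ' : ∀ᶠ u in atTop, |δ u| < min r (1 / 2) := by
    have := hδ (Metric.ball_mem_nhds 0 (lt_min hr one_half_pos))
    filter_upwards [this] with u hu
    simpa [Real.dist_eq] using hu
  filter_upwards [hδ'] with u hu y hy
  set t := δ u with ht
  have hy0 : (0 : ℝ) < y := lt_of_lt_of_le one_pos hy
  have hyτ1 : y ^ τ ≤ 1 := by
    have := Real.rpow_le_rpow_of_exponent_le hy hτ.le
    simpa using this
  have hyτ0 : (0 : ℝ) < y ^ τ := Real.rpow_pos_of_pos hy0 τ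
  set x := t * (1 - y ^ τ) with hx
  have hs0 : (0 : ℝ) ≤ 1 - y ^ τ := by linarith
  have hs1 : 1 - y ^ τ ≤ 1 := by linarith
  have hxt : |x| ≤ |t| := by
    rw [hx, abs_mul, abs_of_nonneg hs0]
    nlinarith [abs_nonneg t]
  have hxr : |x| < r := lt_of_le_of_lt hxt (lt_of_lt_of_le hu (min_le_left _ _))
  have hxhalf : |x| < 1 / 2 := lt_of_le_of_lt hxt (lt_of_lt_of_le hu (min_le_right _ _))
  have h1x : (0 : ℝ) < 1 + x := by
    have := abs_lt.mp hxhalf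
    linarith [this.1]
  have hrw : y * (1 + t - t * y ^ τ) = y * (1 + x) := by rw [hx]; ring
  rw [hrw, Real.mul_rpow hy0.le h1x.le]
  have hxa : γ⁻¹ * t * (1 - y ^ τ) = γ⁻¹ * x := by rw [hx]; ring
  rw [hxa, ← mul_sub, abs_mul]
  have hkey : |(1 + x) ^ (-1 / γ) - (1 - γ⁻¹ * x)| ≤ ε * |x| := by
    have := hball (by simpa [Real.dist_eq] using hxr)
    have heq : (1 + x) ^ (-1 / γ) - 1 - x * (-1 / γ) =
        (1 + x) ^ (-1 / γ) - (1 - γ⁻¹ * x) := by ring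
    rwa [heq] at this
  have hy1 : |y ^ (-1 / γ)| ≤ 1 := by
    rw [abs_of_nonneg (Real.rpow_nonneg hy0.le _)]
    exact Real.rpow_le_one_of_one_le_of_nonpos hy (by rw [neg_div]; exact neg_nonpos.mpr (by positivity))
  calc |y ^ (-1 / γ)| * |(1 + x) ^ (-1 / γ) - (1 - γ⁻¹ * x)|
      ≤ 1 * (ε * |x|) := by
        exact mul_le_mul hy1 hkey (abs_nonneg _) one_pos.le
    _ = ε * |x| := one_mul _
    _ ≤ ε * |t| := by exact mul_le_mul_of_nonneg_left hxt hε.le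
end

section
/- Let γ > 0, τ < 0, and let F satisfy x^{1/γ}(1-F(x)) → C ∈ (0,∞) as x → ∞. With U(y) = inf{x : F(x) ≥ 1 - 1/y} the tail quantile function, one has y^{-γ} U(y) → C^γ as y → ∞. -/
open Real Filter Topology

noncomputable def tailQuantile (F : ℝ → ℝ) (y : ℝ) : ℝ :=
  sInf {x : ℝ | 1 - 1 / y ≤ F x}

lemma key_bounds (γ C : ℝ) (hγ : 0 < γ) (hC : 0 < C)
    (F : ℝ → ℝ) (hF : Monotone F)
    (htail : Tendsto (fun x => x ^ (1 / γ) * (1 - F x)) atTop (nhds C))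
    (δ : ℝ) (hδ : 0 < δ) (hδC : δ < C) :
    ∀ᶠ y in atTop, (C - δ) ^ γ ≤ y ^ (-γ) * tailQuantile F y ∧
      y ^ (-γ) * tailQuantile F y ≤ (C + δ) ^ γ := by
  have h1 : ∀ᶠ x in atTop,
      (fun x => x ^ (1 / γ) * (1 - F x)) x ∈ Set.Ioo (C - δ) (C + δ) :=
    htail.eventually (Ioo_mem_nhds (by linarith) (by linarith))
  have h2 := (h1.and (eventually_ge_atTop (1 : ℝ)))
  obtain ⟨x₀, hx₀⟩ := eventually_atTop.mp h2
  obtain ⟨⟨hx₀lo, hx₀hi⟩, hx₀1⟩ := hx₀ x₀ le_rfl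
  simp only at hx₀lo hx₀hi
  have hx₀pos : (0 : ℝ) < x₀ := by linarith
  have hx₀pow : 0 < x₀ ^ (1 / γ) := rpow_pos_of_pos hx₀pos _
  set a₀ := 1 - F x₀ with ha₀def
  have ha₀ : 0 < a₀ := by nlinarith
  have htend : Tendsto (fun y : ℝ => ((C + δ) * y) ^ γ) atTop atTop :=
    (tendsto_rpow_atTop hγ).comp (tendsto_id.const_mul_atTop (by linarith))
  filter_upwards [eventually_gt_atTop (1 / a₀), eventually_gt_atTop (0 : ℝ),
    htend.eventually_ge_atTop x₀] with y hy1 hy0 hy3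
  have hyinv : 1 / y < a₀ := by
    rw [div_lt_iff₀ hy0]
    have := (div_lt_iff₀ ha₀).mp hy1
    nlinarith
  set x₁ := ((C + δ) * y) ^ γ with hx₁def
  set x₂ := ((C - δ) * y) ^ γ with hx₂def
  have hCpy : 0 < (C + δ) * y := mul_pos (by linarith) hy0
  have hCmy : 0 < (C - δ) * y := mul_pos (by linarith) hy0
  have hx₁powEq : x₁ ^ (1 / γ) = (C + δ) * y := by
    rw [hx₁def, ← Real.rpow_mul hCpy.le, mul_one_div_cancel hγ.ne', Real.rpow_one]
  have hx₁pos : 0 < x₁ := rpow_pos_of_pos hCpy _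
  -- x₁ belongs to the set
  have hx₁mem : x₁ ∈ {x : ℝ | 1 - 1 / y ≤ F x} := by
    obtain ⟨⟨hlo, hhi⟩, h1x⟩ := hx₀ x₁ hy3
    simp only at hlo hhi
    rw [hx₁powEq] at hlo hhi
    have : 1 - F x₁ < 1 / y := by
      rw [lt_div_iff₀ hy0]
      nlinarith
    simp only [Set.mem_setOf_eq]
    linarith
  -- lower bound for the set
  have hlb : ∀ x ∈ {x : ℝ | 1 - 1 / y ≤ F x}, x₂ ≤ x := by
    intro x hx
    simp only [Set.mem_setOf_eq] at hx
    have hxx₀ : x₀ < x := by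
      by_contra h
      push_neg at h
      have := hF h
      have : a₀ ≤ 1 / y := by simp only [ha₀def]; linarith
      linarith
    obtain ⟨⟨hlo, hhi⟩, h1x⟩ := hx₀ x hxx₀.le
    simp only at hlo hhi
    have hxpos : 0 < x := by linarith
    have hs : 0 < x ^ (1 / γ) := rpow_pos_of_pos hxpos _
    have hFmy : (1 - F x) * y ≤ 1 := by
      have : 1 - F x ≤ 1 / y := by linarith
      calc (1 - F x) * y ≤ (1 / y) * y := by nlinarith
        _ = 1 := by field_simp
    have h5 : (C - δ) * y < x ^ (1 / γ) := by nlinarith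
    have : x₂ ≤ (x ^ (1 / γ)) ^ γ :=
      Real.rpow_le_rpow hCmy.le h5.le hγ.le
    rwa [← Real.rpow_mul hxpos.le, one_div_mul_cancel hγ.ne', Real.rpow_one] at this
  have hne : {x : ℝ | 1 - 1 / y ≤ F x}.Nonempty := ⟨x₁, hx₁mem⟩
  have hbdd : BddBelow {x : ℝ | 1 - 1 / y ≤ F x} := ⟨x₂, hlb⟩
  have hU1 : x₂ ≤ tailQuantile F y := le_csInf hne hlb
  have hU2 : tailQuantile F y ≤ x₁ := csInf_le hbdd hx₁mem
  have hyγ : y ^ (-γ) * y ^ γ = 1 := by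
    rw [← Real.rpow_add hy0]; simp
  have hypos : 0 < y ^ (-γ) := rpow_pos_of_pos hy0 _
  have hx₂eq : y ^ (-γ) * x₂ = (C - δ) ^ γ := by
    rw [hx₂def, Real.mul_rpow (by linarith) hy0.le]
    calc y ^ (-γ) * ((C - δ) ^ γ * y ^ γ)
        = (C - δ) ^ γ * (y ^ (-γ) * y ^ γ) := by ring
      _ = (C - δ) ^ γ := by rw [hyγ, mul_one]
  have hx₁eq : y ^ (-γ) * x₁ = (C + δ) ^ γ := by
    rw [hx₁def, Real.mul_rpow (by linarith) hy0.le]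
    calc y ^ (-γ) * ((C + δ) ^ γ * y ^ γ)
        = (C + δ) ^ γ * (y ^ (-γ) * y ^ γ) := by ring
      _ = (C + δ) ^ γ := by rw [hyγ, mul_one]
  constructor
  · rw [← hx₂eq]; exact mul_le_mul_of_nonneg_left hU1 hypos.le
  · rw [← hx₁eq]; exact mul_le_mul_of_nonneg_left hU2 hypos.le

/-- If x^{1/γ}(1-F(x)) → C ∈ (0,∞), then y^{-γ} U(y) → C^γ as y → ∞. -/
theorem tailQuantile_asymptotics (γ C : ℝ) (hγ : 0 < γ) (hC : 0 < C)
    (F : ℝ → ℝ) (hF : Monotone F)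
    (htail : Tendsto (fun x => x ^ (1 / γ) * (1 - F x)) atTop (nhds C)) :
    Tendsto (fun y => y ^ (-γ) * tailQuantile F y) atTop (nhds (C ^ γ)) := by
  rw [tendsto_order]
  constructor
  · intro a ha
    have hcont : ContinuousAt (fun t : ℝ => (C - t) ^ γ) 0 := by
      have h1 : ContinuousAt (fun s : ℝ => s ^ γ) (C - 0) := by
        apply Real.continuousAt_rpow_const
        left; simp [hC.ne']
      exact h1.comp ((continuous_const.sub continuous_id).continuousAt)
    have h0 : (fun t : ℝ => (C - t) ^ γ) 0 = C ^ γ := by simp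
    have hev : ∀ᶠ t in 𝓝 (0 : ℝ), a < (C - t) ^ γ := by
      have := hcont.tendsto
      rw [show ((C - (0:ℝ)) ^ γ) = C ^ γ by simp] at this
      exact this.eventually (eventually_gt_nhds ha)
    have hev2 : ∀ᶠ t in 𝓝[>] (0 : ℝ), a < (C - t) ^ γ ∧ 0 < t ∧ t < C :=
      ((hev.filter_mono nhdsWithin_le_nhds).and
        ((eventually_mem_nhdsWithin).and
          ((gt_mem_nhds hC : ∀ᶠ t in 𝓝 (0:ℝ), t < C).filter_mono nhdsWithin_le_nhds))).mono
        (fun t ⟨h1, h2, h3⟩ => ⟨h1, h2, h3⟩)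
    obtain ⟨δ, hδa, hδ0, hδC⟩ := hev2.exists
    filter_upwards [key_bounds γ C hγ hC F hF htail δ hδ0 hδC] with y hy
    exact lt_of_lt_of_le hδa hy.1
  · intro b hb
    have hcont : ContinuousAt (fun t : ℝ => (C + t) ^ γ) 0 := by
      have h1 : ContinuousAt (fun s : ℝ => s ^ γ) (C + 0) := by
        apply Real.continuousAt_rpow_const
        left; simp [hC.ne']
      exact h1.comp ((continuous_const.add continuous_id).continuousAt)
    have h0 : (fun t : ℝ => (C + t) ^ γ) 0 = C ^ γ := by simp
    have hev : ∀ᶠ t in 𝓝 (0 : ℝ), (C + t) ^ γ < b := by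
      have := hcont.tendsto
      rw [show ((C + (0:ℝ)) ^ γ) = C ^ γ by simp] at this
      exact this.eventually (eventually_lt_nhds hb)
    have hev2 : ∀ᶠ t in 𝓝[>] (0 : ℝ), (C + t) ^ γ < b ∧ 0 < t ∧ t < C :=
      ((hev.filter_mono nhdsWithin_le_nhds).and
        ((eventually_mem_nhdsWithin).and
          ((gt_mem_nhds hC : ∀ᶠ t in 𝓝 (0:ℝ), t < C).filter_mono nhdsWithin_le_nhds))).mono
        (fun t ⟨h1, h2, h3⟩ => ⟨h1, h2, h3⟩)
    obtain ⟨δ, hδb, hδ0, hδC⟩ := hev2.exists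
    filter_upwards [key_bounds γ C hγ hC F hF htail δ hδ0 hδC] with y hy
    exact lt_of_le_of_lt hy.2 hδb
end

section
/- Let η be a measurable function, eventually nonzero and of constant sign, with |η| regularly varying of index ρ < 0. Then for every x₀ > 0, sup_{x ≥ x₀} |η(xy)/η(y) - x^ρ| → 0 as y → ∞. -/
open Real Filter
open MeasureTheory Set
open scoped ENNReal

/-- Regular variation at infinity with index ρ. -/
def RegularlyVarying (f : ℝ → ℝ) (ρ : ℝ) : Prop :=
  ∀ x : ℝ, 0 < x → Tendsto (fun u => f (u * x) / f u) atTop (nhds (x ^ ρ))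


lemma uct_unit (h : ℝ → ℝ) (hm : Measurable h)
    (hc : ∀ u : ℝ, Tendsto (fun t => h (t + u) - h t) atTop (nhds 0))
    (c : ℝ) (ε : ℝ) (hε : 0 < ε) :
    ∀ᶠ t in atTop, ∀ u ∈ Icc c (c + 1), |h (t + u) - h t| ≤ ε := by
  by_contra hcon
  rw [Filter.not_eventually] at hcon
  have hseq : ∀ n : ℕ, ∃ t : ℝ, (n : ℝ) ≤ t ∧ ∃ u ∈ Icc c (c + 1),
      ε < |h (t + u) - h t| := by
    intro n
    obtain ⟨t, ht, hp⟩ := (frequently_atTop.mp hcon) n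
    push_neg at hp
    obtain ⟨u, hu, hlt⟩ := hp
    exact ⟨t, ht, u, hu, hlt⟩
  choose t ht u hu hgt using hseq
  have htt : Tendsto t atTop atTop :=
    tendsto_atTop_mono ht tendsto_natCast_atTop_atTop
  have htu : Tendsto (fun n => t n + u n) atTop atTop := by
    apply tendsto_atTop_mono (f := fun n => t n + c)
    · intro n; linarith [(hu n).1]
    · exact tendsto_atTop_add_const_right atTop c htt
  -- the "good" sets
  set V : ℕ → Set ℝ := fun n =>
    Icc (c + 1) (c + 3) ∩ {s | ∀ m, n ≤ m → |h (t m + s) - h (t m)| ≤ ε / 4} with hV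
  set W : ℕ → Set ℝ := fun n =>
    Icc 0 3 ∩ {s | ∀ m, n ≤ m → |h (t m + u m + s) - h (t m + u m)| ≤ ε / 4} with hW
  have hVm : ∀ n, MeasurableSet (V n) := by
    intro n
    apply measurableSet_Icc.inter
    have : {s : ℝ | ∀ m, n ≤ m → |h (t m + s) - h (t m)| ≤ ε / 4}
        = ⋂ m, ⋂ (_ : n ≤ m), {s | |h (t m + s) - h (t m)| ≤ ε / 4} := by
      ext s; simp [Set.mem_iInter]
    rw [this]
    refine MeasurableSet.iInter fun m => MeasurableSet.iInter fun _ => ?_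
    exact measurableSet_le (((hm.comp (measurable_const_add (t m))).sub
      measurable_const).abs) measurable_const
  have hWm : ∀ n, MeasurableSet (W n) := by
    intro n
    apply measurableSet_Icc.inter
    have : {s : ℝ | ∀ m, n ≤ m → |h (t m + u m + s) - h (t m + u m)| ≤ ε / 4}
        = ⋂ m, ⋂ (_ : n ≤ m), {s | |h (t m + u m + s) - h (t m + u m)| ≤ ε / 4} := by
      ext s; simp [Set.mem_iInter]
    rw [this]
    refine MeasurableSet.iInter fun m => MeasurableSet.iInter fun _ => ?_
    exact measurableSet_le (((hm.comp (measurable_const_add (t m + u m))).sub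
      measurable_const).abs) measurable_const
  have habs : ∀ᶠ x in nhds (0:ℝ), |x| ≤ ε / 4 := by
    have : ∀ᶠ x in nhds (0:ℝ), |x - 0| < ε / 4 :=
      eventually_abs_sub_lt 0 (by linarith)
    filter_upwards [this] with x hx
    simpa using hx.le
  have hVmono : Monotone V := by
    intro a b hab s hs
    exact ⟨hs.1, fun m hm' => hs.2 m (le_trans hab hm')⟩
  have hWmono : Monotone W := by
    intro a b hab s hs
    exact ⟨hs.1, fun m hm' => hs.2 m (le_trans hab hm')⟩
  have hVU : ⋃ n, V n = Icc (c + 1) (c + 3) := by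
    apply Set.Subset.antisymm
    · exact Set.iUnion_subset fun n => Set.inter_subset_left
    · intro s hs
      have : Tendsto (fun m => h (t m + s) - h (t m)) atTop (nhds 0) :=
        (hc s).comp htt
      obtain ⟨N, hN⟩ := eventually_atTop.mp (this.eventually habs)
      exact Set.mem_iUnion.2 ⟨N, hs, hN⟩
  have hWU : ⋃ n, W n = Icc (0:ℝ) 3 := by
    apply Set.Subset.antisymm
    · exact Set.iUnion_subset fun n => Set.inter_subset_left
    · intro s hs
      have : Tendsto (fun m => h (t m + u m + s) - h (t m + u m)) atTop (nhds 0) :=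
        (hc s).comp htu
      obtain ⟨N, hN⟩ := eventually_atTop.mp (this.eventually habs)
      exact Set.mem_iUnion.2 ⟨N, hs, hN⟩
  have hVt : Tendsto (fun n => volume (V n)) atTop (nhds 2) := by
    have := tendsto_measure_iUnion_atTop (μ := volume) hVmono
    rw [hVU] at this
    simpa [Function.comp_def, Real.volume_Icc, show c + 3 - (c + 1) = (2:ℝ) by ring,
      ENNReal.ofReal_ofNat] using this
  have hWt : Tendsto (fun n => volume (W n)) atTop (nhds 3) := by
    have := tendsto_measure_iUnion_atTop (μ := volume) hWmono
    rw [hWU] at this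
    simpa [Function.comp_def, Real.volume_Icc, ENNReal.ofReal_ofNat] using this
  have hVlarge : ∀ᶠ n in atTop, (7/4 : ℝ≥0∞) < volume (V n) :=
    hVt.eventually_const_lt (by rw [ENNReal.div_lt_iff (by norm_num) (by norm_num)]; norm_num)
  have hWlarge : ∀ᶠ n in atTop, (11/4 : ℝ≥0∞) < volume (W n) :=
    hWt.eventually_const_lt (by rw [ENNReal.div_lt_iff (by norm_num) (by norm_num)]; norm_num)
  obtain ⟨N, hVN, hWN⟩ := (hVlarge.and hWlarge).exists
  -- translated W
  set W' : Set ℝ := (fun s => s + -(u N)) ⁻¹' (W N) with hW'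
  have hW'vol : volume W' = volume (W N) := measure_preimage_add_right volume _ _
  have hsubV : V N ⊆ Icc c (c + 4) :=
    Set.inter_subset_left.trans (Icc_subset_Icc (by linarith) (by linarith))
  have hsubW' : W' ⊆ Icc c (c + 4) := by
    intro s hs
    have h1 : s + -(u N) ∈ Icc (0:ℝ) 3 := hs.1
    have h2 := hu N
    simp only [mem_Icc] at h1 h2 ⊢
    constructor <;> linarith [h1.1, h1.2, h2.1, h2.2]
  have hinter : (V N ∩ W').Nonempty := by
    apply nonempty_of_measure_ne_zero (μ := volume)
    intro h0
    have hun : volume (V N ∪ W') + volume (V N ∩ W') = volume (V N) + volume W' :=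
      measure_union_add_inter (V N) ((hWm N).preimage (measurable_add_const _))
    rw [h0, add_zero] at hun
    have hle : volume (V N ∪ W') ≤ volume (Icc c (c + 4)) :=
      measure_mono (Set.union_subset hsubV hsubW')
    rw [Real.volume_Icc, show c + 4 - c = (4:ℝ) by ring] at hle
    have h4 : (ENNReal.ofReal (4:ℝ)) = (4 : ℝ≥0∞) := by
      simp [ENNReal.ofReal_ofNat]
    rw [h4] at hle
    have : (7/4 : ℝ≥0∞) + 11/4 < volume (V N) + volume W' := by
      rw [hW'vol]
      exact ENNReal.add_lt_add hVN hWN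
    rw [← hun] at this
    have hlt4 : (7/4 : ℝ≥0∞) + 11/4 < 4 := lt_of_lt_of_le this hle
    have hge4 : (4:ℝ≥0∞) ≤ 7/4 + 11/4 := by
      rw [ENNReal.div_add_div_same, ENNReal.le_div_iff_mul_le (by norm_num) (by norm_num)]
      norm_num
    exact absurd hlt4 (not_lt.2 hge4)
  obtain ⟨s, hsV, hsW⟩ := hinter
  have hA : |h (t N + s) - h (t N)| ≤ ε / 4 := hsV.2 N le_rfl
  have hB : |h (t N + u N + (s + -(u N))) - h (t N + u N)| ≤ ε / 4 := hsW.2 N le_rfl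
  have heq : t N + u N + (s + -(u N)) = t N + s := by ring
  rw [heq] at hB
  have := hgt N
  have htri : |h (t N + u N) - h (t N)| ≤
      |h (t N + u N) - h (t N + s)| + |h (t N + s) - h (t N)| := abs_sub_le _ _ _
  rw [abs_sub_comm (h (t N + u N)) (h (t N + s))] at htri
  linarith

lemma uct_Icc (h : ℝ → ℝ) (hm : Measurable h)
    (hc : ∀ u : ℝ, Tendsto (fun t => h (t + u) - h t) atTop (nhds 0))
    (a b : ℝ) (ε : ℝ) (hε : 0 < ε) :
    ∀ᶠ t in atTop, ∀ u ∈ Icc a b, |h (t + u) - h t| ≤ ε := by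
  obtain ⟨n, hn⟩ := exists_nat_ge (b - a)
  have key : ∀ᶠ t in atTop, ∀ i ∈ Finset.range (n + 1),
      ∀ u ∈ Icc (a + i) (a + i + 1), |h (t + u) - h t| ≤ ε := by
    rw [eventually_all_finset]
    intro i _
    exact uct_unit h hm hc (a + i) ε hε
  filter_upwards [key] with t htk u hu
  have h0 : (0 : ℝ) ≤ u - a := by linarith [hu.1]
  have hi1 : (⌊u - a⌋₊ : ℝ) ≤ u - a := Nat.floor_le h0
  have hi2 : u - a < ⌊u - a⌋₊ + 1 := Nat.lt_floor_add_one _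
  have hin : ⌊u - a⌋₊ ∈ Finset.range (n + 1) := by
    rw [Finset.mem_range, Nat.lt_succ_iff, ← Nat.cast_le (α := ℝ)]
    linarith [hu.2]
  exact htk _ hin u ⟨by linarith, by linarith⟩

lemma exp_aux (A B E : ℝ) (hA : 0 < A) (hAB : A * B = 1) (hE : B ≤ E) :
    -(A - 1) ≤ E - 1 := by nlinarith [sq_nonneg (A - 1)]


/-- Uniform convergence theorem for regularly varying functions with negative
index: if η is measurable, eventually nonzero of constant sign, and |η| is
regularly varying of index ρ < 0, then η(xy)/η(y) → x^ρ uniformly in x ≥ x₀. -/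
theorem uniform_convergence_reg_varying (η : ℝ → ℝ) (hη : Measurable η)
    (ρ : ℝ) (hρ : ρ < 0)
    (hsign : (∀ᶠ y in atTop, 0 < η y) ∨ (∀ᶠ y in atTop, η y < 0))
    (hRV : RegularlyVarying (fun y => |η y|) ρ) :
    ∀ x₀ : ℝ, 0 < x₀ → ∀ ε > 0, ∀ᶠ y in atTop, ∀ x : ℝ, x₀ ≤ x →
      |η (x * y) / η y - x ^ ρ| ≤ ε := by
  -- eventual sign control
  have hsgn : ∃ Y₁ : ℝ, 0 < Y₁ ∧ (∀ z, Y₁ ≤ z → 0 < |η z|) ∧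
      (∀ z w, Y₁ ≤ z → Y₁ ≤ w → η z / η w = |η z| / |η w|) := by
    rcases hsign with hp | hn
    · obtain ⟨Y₀, hY₀⟩ := eventually_atTop.mp hp
      refine ⟨max Y₀ 1, lt_of_lt_of_le one_pos (le_max_right _ _),
        fun z hz => ?_, fun z w hz hw => ?_⟩
      · exact abs_pos.2 (hY₀ z (le_trans (le_max_left _ _) hz)).ne'
      · rw [abs_of_pos (hY₀ z (le_trans (le_max_left _ _) hz)),
          abs_of_pos (hY₀ w (le_trans (le_max_left _ _) hw))]
    · obtain ⟨Y₀, hY₀⟩ := eventually_atTop.mp hn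
      refine ⟨max Y₀ 1, lt_of_lt_of_le one_pos (le_max_right _ _),
        fun z hz => ?_, fun z w hz hw => ?_⟩
      · exact abs_pos.2 (hY₀ z (le_trans (le_max_left _ _) hz)).ne
      · rw [abs_of_neg (hY₀ z (le_trans (le_max_left _ _) hz)),
          abs_of_neg (hY₀ w (le_trans (le_max_left _ _) hw)), neg_div_neg_eq]
  obtain ⟨Y₁, hY₁0, hfpos, hratio⟩ := hsgn
  set H : ℝ → ℝ := fun s => Real.log |η (Real.exp s)| with hHdef
  set h : ℝ → ℝ := fun s => H s - ρ * s with hhdef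
  have hmh : Measurable h := by
    apply Measurable.sub
    · exact Real.measurable_log.comp ((hη.comp Real.measurable_exp).abs)
    · exact measurable_id.const_mul ρ
  have hc : ∀ u : ℝ, Tendsto (fun s => h (s + u) - h s) atTop (nhds 0) := by
    intro u
    have h1 := hRV (Real.exp u) (Real.exp_pos u)
    have h2 : (Real.exp u) ^ ρ = Real.exp (u * ρ) := by
      rw [Real.rpow_def_of_pos (Real.exp_pos u), Real.log_exp]
    rw [h2] at h1
    have h3 : Tendsto (fun s => |η (Real.exp (s + u))| / |η (Real.exp s)|)
        atTop (nhds (Real.exp (u * ρ))) := by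
      apply (h1.comp Real.tendsto_exp_atTop).congr
      intro s
      simp [Function.comp, Real.exp_add]
    have h4 : Tendsto (fun s => Real.log (|η (Real.exp (s + u))| / |η (Real.exp s)|))
        atTop (nhds (u * ρ)) := by
      have := (Real.continuousAt_log (Real.exp_pos (u * ρ)).ne').tendsto.comp h3
      simpa [Function.comp_def, Real.log_exp] using this
    have hev : (fun s => Real.log (|η (Real.exp (s + u))| / |η (Real.exp s)|))
        =ᶠ[atTop] fun s => H (s + u) - H s := by
      filter_upwards [eventually_ge_atTop (Real.log Y₁),
        eventually_ge_atTop (Real.log Y₁ - u)] with s hs1 hs2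
      have e1 : Y₁ ≤ Real.exp s := by
        rw [← Real.exp_log hY₁0]; exact Real.exp_le_exp.2 hs1
      have e2 : Y₁ ≤ Real.exp (s + u) := by
        rw [← Real.exp_log hY₁0]; exact Real.exp_le_exp.2 (by linarith)
      exact Real.log_div (hfpos _ e2).ne' (hfpos _ e1).ne'
    have h5 : Tendsto (fun s => H (s + u) - H s) atTop (nhds (u * ρ)) :=
      h4.congr' hev
    have h6 := h5.sub_const (u * ρ)
    rw [sub_self] at h6
    apply h6.congr
    intro s
    simp only [hhdef]
    ring
  intro x₀ hx₀ ε hε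
  set u₀ : ℝ := Real.log x₀ with hu₀def
  set C : ℝ := Real.exp (ρ * u₀) with hCdef
  have hC0 : 0 < C := Real.exp_pos _
  set δ : ℝ := Real.log (1 + ε / C) with hδdef
  have hδ0 : 0 < δ := Real.log_pos (by nlinarith [div_pos hε hC0])
  set M : ℝ := max (max u₀ 1) (max (Real.log ε / ρ) (1 + 2 * Real.log ε / ρ)) with hMdef
  have hM1 : 1 ≤ M := le_trans (le_max_right u₀ 1) (le_max_left _ _)
  have hMu₀ : u₀ ≤ M := le_trans (le_max_left u₀ 1) (le_max_left _ _)
  have hMε1 : Real.log ε / ρ ≤ M := le_trans (le_max_left _ _) (le_max_right _ _)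
  have hMε2 : 1 + 2 * Real.log ε / ρ ≤ M := le_trans (le_max_right _ _) (le_max_right _ _)
  obtain ⟨T₁, hT₁⟩ := eventually_atTop.mp (uct_Icc h hmh hc u₀ M δ hδ0)
  obtain ⟨T₂, hT₂⟩ := eventually_atTop.mp
    (uct_Icc h hmh hc 1 2 (-ρ / 2) (by linarith))
  rw [eventually_atTop]
  refine ⟨max (max (Real.exp T₁) (Real.exp T₂)) (max Y₁ (max (Y₁ / x₀) 1)), ?_⟩
  intro y hy x hx
  have hy1 : (1 : ℝ) ≤ y :=
    (le_max_right _ _).trans ((le_max_right _ _).trans ((le_max_right _ _).trans hy))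
  have hy0 : 0 < y := lt_of_lt_of_le one_pos hy1
  have hx0 : 0 < x := lt_of_lt_of_le hx₀ hx
  set s : ℝ := Real.log y with hsdef
  set u : ℝ := Real.log x with hudef
  have hes : Real.exp s = y := Real.exp_log hy0
  have hsT₁ : T₁ ≤ s := by
    rw [hsdef, ← Real.log_exp T₁]
    exact (Real.log_le_log_iff (Real.exp_pos _) hy0).2
      ((le_max_left _ _).trans ((le_max_left _ _).trans hy))
  have hsT₂ : T₂ ≤ s := by
    rw [hsdef, ← Real.log_exp T₂]
    exact (Real.log_le_log_iff (Real.exp_pos _) hy0).2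
      ((le_max_right _ _).trans ((le_max_left _ _).trans hy))
  have huu₀ : u₀ ≤ u := (Real.log_le_log_iff hx₀ hx0).2 hx
  have hyY₁ : Y₁ ≤ y := (le_max_left _ _).trans ((le_max_right _ _).trans hy)
  have hxyY₁ : Y₁ ≤ x * y := by
    have h1 : Y₁ / x₀ ≤ y :=
      (le_max_left _ _).trans ((le_max_right _ _).trans ((le_max_right _ _).trans hy))
    have h2 : Y₁ ≤ x₀ * y := by
      rw [div_le_iff₀ hx₀] at h1; linarith [h1]
    have h3 : x₀ * y ≤ x * y := mul_le_mul_of_nonneg_right hx hy0.le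
    linarith
  have hexp_su : Real.exp (s + u) = x * y := by
    rw [Real.exp_add, hes, Real.exp_log hx0]; ring
  have hHs : H s = Real.log |η y| := by rw [hHdef]; simp [hes]
  have hHsu : H (s + u) = Real.log |η (x * y)| := by rw [hHdef]; simp [hexp_su]
  have hratio_eq : η (x * y) / η y = Real.exp (H (s + u) - H s) := by
    rw [hratio _ _ hxyY₁ hyY₁, hHsu, hHs, Real.exp_sub,
      Real.exp_log (hfpos _ hxyY₁), Real.exp_log (hfpos _ hyY₁)]
  have hxρ : x ^ ρ = Real.exp (ρ * u) := by
    rw [Real.rpow_def_of_pos hx0, hudef, mul_comm]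
  rw [hratio_eq, hxρ]
  set r : ℝ := H (s + u) - H s with hrdef
  rcases le_total u M with hcase | hcase
  · -- compact part
    have hh : |h (s + u) - h s| ≤ δ := hT₁ s hsT₁ u ⟨huu₀, hcase⟩
    have hrq : |r - ρ * u| ≤ δ := by
      have e0 : h (s + u) - h s = r - ρ * u := by
        simp only [hhdef, hrdef]; ring
      rwa [e0] at hh
    have hqC : Real.exp (ρ * u) ≤ C := by
      rw [hCdef]
      exact Real.exp_le_exp.2 (mul_le_mul_of_nonpos_left huu₀ hρ.le)
    have habs1 : |Real.exp (r - ρ * u) - 1| ≤ Real.exp δ - 1 := by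
      rcases abs_le.mp hrq with ⟨hl, hr'⟩
      rw [abs_le]
      constructor
      · have e1 : Real.exp (-δ) ≤ Real.exp (r - ρ * u) := Real.exp_le_exp.2 (by linarith)
        refine exp_aux _ _ _ (Real.exp_pos δ) ?_ e1
        rw [← Real.exp_add]
        simp
      · linarith [Real.exp_le_exp.2 hr']
    have key : |Real.exp r - Real.exp (ρ * u)| ≤ Real.exp (ρ * u) * (Real.exp δ - 1) := by
      have e3 : Real.exp r - Real.exp (ρ * u)
          = Real.exp (ρ * u) * (Real.exp (r - ρ * u) - 1) := by
        rw [mul_sub, mul_one, ← Real.exp_add]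
        congr 1
        ring
      rw [e3, abs_mul, abs_of_pos (Real.exp_pos _)]
      exact mul_le_mul_of_nonneg_left habs1 (Real.exp_pos _).le
    have hδval : Real.exp δ - 1 = ε / C := by
      rw [hδdef, Real.exp_log (by positivity)]; ring
    calc |Real.exp r - Real.exp (ρ * u)| ≤ Real.exp (ρ * u) * (Real.exp δ - 1) := key
      _ ≤ C * (ε / C) := by
          rw [hδval]
          exact mul_le_mul_of_nonneg_right hqC (by positivity)
      _ = ε := by field_simp
  · -- tail part
    have hu1 : (1 : ℝ) ≤ u := le_trans hM1 hcase
    have hu0 : (0 : ℝ) ≤ u := by linarith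
    have hfl1 : 1 ≤ ⌊u⌋₊ := Nat.le_floor (by exact_mod_cast hu1)
    set n : ℕ := ⌊u⌋₊ - 1 with hndef
    have hncast : (n : ℝ) = (⌊u⌋₊ : ℝ) - 1 := by
      rw [hndef, Nat.cast_sub hfl1]; simp
    have hfl_le : (⌊u⌋₊ : ℝ) ≤ u := Nat.floor_le hu0
    have hfl_gt : u < ⌊u⌋₊ + 1 := Nat.lt_floor_add_one _
    set w : ℝ := u - n with hwdef
    have hw1 : 1 ≤ w := by rw [hwdef, hncast]; linarith
    have hw2 : w ≤ 2 := by rw [hwdef, hncast]; linarith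
    have step : ∀ s' : ℝ, T₂ ≤ s' → ∀ w' ∈ Icc (1:ℝ) 2,
        H (s' + w') - H s' ≤ ρ / 2 := by
      intro s' hs' w' hw'
      have h1 : h (s' + w') - h s' ≤ -ρ / 2 := (abs_le.mp (hT₂ s' hs' w' hw')).2
      have h2 : h (s' + w') - h s' = (H (s' + w') - H s') - ρ * w' := by
        simp only [hhdef]; ring
      have h3 : ρ * w' ≤ ρ := by
        have := mul_le_mul_of_nonpos_left hw'.1 (le_of_lt hρ)
        simpa using this
      rw [h2] at h1; linarith
    have tel : ∀ k : ℕ, H (s + k) - H s ≤ k * (ρ / 2) := by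
      intro k
      induction k with
      | zero => simp
      | succ k ih =>
        have hstep := step (s + k) (by have : (0:ℝ) ≤ (k:ℝ) := Nat.cast_nonneg k; linarith) 1 ⟨le_refl 1, by norm_num⟩
        push_cast
        have harg : s + ((k : ℝ) + 1) = (s + k) + 1 := by ring
        calc H (s + ((k : ℝ) + 1)) - H s
            = (H ((s + k) + 1) - H (s + k)) + (H (s + k) - H s) := by rw [harg]; ring
          _ ≤ ρ / 2 + k * (ρ / 2) := add_le_add hstep ih
          _ = ((k : ℝ) + 1) * (ρ / 2) := by ring
    have hT₂n : T₂ ≤ s + n := by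
      have : (0:ℝ) ≤ n := Nat.cast_nonneg n
      linarith
    have hlast : H ((s + n) + w) - H (s + n) ≤ ρ / 2 := step (s + n) hT₂n w ⟨hw1, hw2⟩
    have harg2 : (s + n) + w = s + u := by rw [hwdef]; ring
    rw [harg2] at hlast
    have htot : r ≤ ((n : ℝ) + 1) * (ρ / 2) := by
      have := tel n
      rw [hrdef]
      have e : H (s + u) - H s = (H (s + u) - H (s + n)) + (H (s + n) - H s) := by ring
      rw [e]
      have e2 : ((n : ℝ) + 1) * (ρ / 2) = (n : ℝ) * (ρ / 2) + ρ / 2 := by ring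
      linarith [hlast, this]
    have hnM : M - 1 ≤ (n : ℝ) + 1 := by rw [hncast]; linarith
    have hrlog : r ≤ Real.log ε := by
      have e1 : ((n : ℝ) + 1) * (ρ / 2) ≤ (M - 1) * (ρ / 2) :=
        mul_le_mul_of_nonpos_right hnM (by linarith)
      have hρ0 : ρ ≠ 0 := hρ.ne
      have hval : (2 * Real.log ε / ρ) * (ρ / 2) = Real.log ε := by
        field_simp
      have e2 : (M - 1) * (ρ / 2) ≤ (2 * Real.log ε / ρ) * (ρ / 2) :=
        mul_le_mul_of_nonpos_right (by linarith) (by linarith)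
      linarith [htot, e1, e2, hval.ge, hval.le]
    have hexp_r : Real.exp r ≤ ε := by
      calc Real.exp r ≤ Real.exp (Real.log ε) := Real.exp_le_exp.2 hrlog
        _ = ε := Real.exp_log hε
    have hexp_q : Real.exp (ρ * u) ≤ ε := by
      have hlu : Real.log ε / ρ ≤ u := le_trans hMε1 hcase
      have h7 : u * ρ ≤ (Real.log ε / ρ) * ρ :=
        mul_le_mul_of_nonpos_right hlu (by linarith)
      have h8 : (Real.log ε / ρ) * ρ = Real.log ε := div_mul_cancel₀ _ hρ.ne
      calc Real.exp (ρ * u) = Real.exp (u * ρ) := by rw [mul_comm]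
        _ ≤ Real.exp (Real.log ε) := Real.exp_le_exp.2 (by linarith)
        _ = ε := Real.exp_log hε
    rw [abs_le]
    constructor
    · linarith [Real.exp_pos r]
    · linarith [Real.exp_pos (ρ * u)]
end

section
/- Let Y₁, Y₂, … be i.i.d. Pareto(1) random variables, γ > 0 and θ₀ < 0. Then sup_{θ ∈ [θ₀, 0]} |k^{-1} Σ_{i=1}^k Y_i^θ - 1/(1-θ)| → 0 in probability as k → ∞ (uniform law of large numbers for the class {y ↦ y^θ : θ ∈ [θ₀, 0]}). -/
open Real MeasureTheory ProbabilityTheory Filter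

open scoped NNReal ENNReal

section ParetoAux

open Set

noncomputable def paretoLaw : Measure ℝ :=
  (volume.restrict (Set.Ioi 1)).withDensity fun x => ENNReal.ofReal (x ^ (-2:ℝ))

lemma paretoLaw_Iic (x : ℝ) :
    paretoLaw (Set.Iic x) = if 1 ≤ x then ENNReal.ofReal (1 - 1/x) else 0 := by
  rw [paretoLaw, withDensity_apply _ measurableSet_Iic, Measure.restrict_restrict measurableSet_Iic]
  split_ifs with hx
  · have h1 : Set.Iic x ∩ Set.Ioi 1 = Set.Ioc 1 x := by
      ext t; simp only [Set.mem_inter_iff, Set.mem_Iic, Set.mem_Ioi, Set.mem_Ioc]; tauto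
    rw [h1]
    have hint : IntegrableOn (fun t : ℝ => t ^ (-2:ℝ)) (Set.Ioc 1 x) := by
      have := (intervalIntegral.intervalIntegrable_rpow (μ := volume) (a := 1) (b := x)
        (r := (-2:ℝ)) (Or.inr (by simp [Set.uIcc_of_le hx]))).1
      exact this
    rw [← ofReal_integral_eq_lintegral_ofReal hint
      ((ae_restrict_iff' measurableSet_Ioc).2 (Filter.Eventually.of_forall
        fun t ht => Real.rpow_nonneg (by linarith [ht.1]) _))]
    congr 1
    rw [← intervalIntegral.integral_of_le hx,
      integral_rpow (Or.inr ⟨by norm_num, by simp [Set.uIcc_of_le hx]⟩)]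
    norm_num
    rw [Real.rpow_neg_one]
    ring
  · have h1 : Set.Iic x ∩ Set.Ioi 1 = ∅ := by
      ext t; simp only [Set.mem_inter_iff, Set.mem_Iic, Set.mem_Ioi, Set.mem_empty_iff_false,
        iff_false, not_and]
      intro h; linarith [lt_of_not_ge hx]
    simp [h1]

instance : IsProbabilityMeasure paretoLaw := by
  constructor
  have h : Filter.Tendsto (fun x : ℝ => paretoLaw (Set.Iic x)) Filter.atTop
      (nhds (paretoLaw Set.univ)) := MeasureTheory.tendsto_measure_Iic_atTop (μ := paretoLaw)
  have h2 : Filter.Tendsto (fun x : ℝ => paretoLaw (Set.Iic x)) Filter.atTop (nhds 1) := by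
    have heq : ∀ᶠ x : ℝ in Filter.atTop, paretoLaw (Set.Iic x) = ENNReal.ofReal (1 - 1/x) := by
      filter_upwards [Filter.eventually_ge_atTop (1:ℝ)] with x hx
      rw [paretoLaw_Iic, if_pos hx]
    rw [Filter.tendsto_congr' heq]
    have h3 : Filter.Tendsto (fun x : ℝ => (1 - 1/x)) Filter.atTop (nhds 1) := by
      simpa [one_div] using (tendsto_const_nhds (x := (1:ℝ))).sub tendsto_inv_atTop_zero
    simpa using (ENNReal.tendsto_ofReal h3)
  exact tendsto_nhds_unique h h2

lemma map_eq_paretoLaw {Ω : Type*} [MeasurableSpace Ω] (μ : Measure Ω) [IsProbabilityMeasure μ]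
    (X : Ω → ℝ) (hm : Measurable X)
    (hP : ∀ y : ℝ, 1 ≤ y → μ {ω | y < X ω} = ENNReal.ofReal (1/y)) :
    μ.map X = paretoLaw := by
  haveI : IsProbabilityMeasure (μ.map X) := Measure.isProbabilityMeasure_map hm.aemeasurable
  refine MeasureTheory.Measure.ext_of_Iic _ _ fun x => ?_
  rw [Measure.map_apply hm measurableSet_Iic, paretoLaw_Iic]
  split_ifs with hx
  · have hc : X ⁻¹' Set.Iic x = {ω | x < X ω}ᶜ := by
      ext ω; simp [not_lt]
    rw [hc, measure_compl (measurableSet_lt measurable_const hm) (measure_ne_top _ _),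
      hP x hx, measure_univ, ENNReal.ofReal_sub _ (by positivity), ENNReal.ofReal_one]
  · have hsub : X ⁻¹' Set.Iic x ⊆ {ω | (1:ℝ) < X ω}ᶜ := by
      intro ω hω
      simp only [Set.mem_preimage, Set.mem_Iic] at hω
      simp only [Set.mem_compl_iff, Set.mem_setOf_eq, not_lt]
      linarith [lt_of_not_ge hx]
    refine le_antisymm (le_trans (measure_mono hsub) ?_) zero_le
    rw [measure_compl (measurableSet_lt measurable_const hm) (measure_ne_top _ _),
      hP 1 le_rfl, measure_univ]
    simp

lemma paretoLaw_integral (θ : ℝ) (hθ : θ ≤ 0) :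
    ∫ x, x ^ θ ∂paretoLaw = 1/(1-θ) := by
  have hmeasf : Measurable fun x : ℝ => Real.toNNReal (x ^ (-2:ℝ)) := by
    measurability
  have hrw : paretoLaw
      = (volume.restrict (Set.Ioi 1)).withDensity
          fun x => ((Real.toNNReal (x ^ (-2:ℝ)) : ℝ≥0) : ℝ≥0∞) := rfl
  rw [hrw, integral_withDensity_eq_integral_smul hmeasf]
  rw [setIntegral_congr_fun measurableSet_Ioi
    (g := fun x : ℝ => x ^ (θ - 2)) ?_]
  · rw [integral_Ioi_rpow_of_lt (by linarith) one_pos, Real.one_rpow]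
    have h1 : θ - 2 + 1 = θ - 1 := by ring
    rw [h1]
    rw [div_eq_div_iff (by linarith) (by linarith)]
    ring
  · intro x hx
    have hx0 : (0:ℝ) < x := lt_trans one_pos hx
    have hco : ((Real.toNNReal (x ^ (-2:ℝ)) : ℝ≥0) : ℝ) = x ^ (-2:ℝ) :=
      Real.coe_toNNReal _ (Real.rpow_nonneg hx0.le _)
    show (((x ^ (-2:ℝ)).toNNReal : ℝ≥0) : ℝ) • x ^ θ = x ^ (θ - 2)
    rw [smul_eq_mul, hco, ← Real.rpow_add hx0, neg_add_eq_sub]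

lemma grid_cover (a h : ℝ) (hh : 0 < h) (N : ℕ) (hN : 1 ≤ N) (x : ℝ)
    (hx1 : a ≤ x) (hx2 : x ≤ a + N * h) :
    ∃ j : ℕ, j + 1 ≤ N ∧ a + j * h ≤ x ∧ x ≤ a + (j + 1 : ℕ) * h := by
  set d := ⌊(x - a) / h⌋₊ with hd
  have hnn : 0 ≤ (x - a) / h := div_nonneg (by linarith) hh.le
  by_cases hcase : d + 1 ≤ N
  · refine ⟨d, hcase, ?_, ?_⟩
    · have := Nat.floor_le hnn
      rw [le_div_iff₀ hh] at this
      linarith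
    · have := Nat.lt_floor_add_one ((x - a) / h)
      rw [div_lt_iff₀ hh] at this
      push_cast
      linarith
  · push_neg at hcase
    have hNd : (N : ℝ) ≤ d := by exact_mod_cast Nat.lt_succ_iff.mp (by omega)
    have hfl : (d : ℝ) ≤ (x - a) / h := Nat.floor_le hnn
    rw [le_div_iff₀ hh] at hfl
    refine ⟨N - 1, by omega, ?_, ?_⟩
    · have h1 : ((N - 1 : ℕ) : ℝ) ≤ (N : ℝ) := by
        exact_mod_cast Nat.cast_le.mpr (Nat.sub_le N 1)
      nlinarith
    · have h1 : ((N - 1 : ℕ) : ℝ) + 1 = (N : ℝ) := by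
        have h2 : (N - 1 : ℕ) + 1 = N := by omega
        exact_mod_cast congrArg (Nat.cast : ℕ → ℝ) h2
      push_cast
      push_cast at h1
      nlinarith

lemma m_lip {a b : ℝ} (hab : a ≤ b) (hb : b ≤ 0) :
    1 / (1 - a) ≤ 1 / (1 - b) ∧ 1 / (1 - b) - 1 / (1 - a) ≤ b - a := by
  have h1a : (1:ℝ) ≤ 1 - a := by linarith
  have h1b : (1:ℝ) ≤ 1 - b := by linarith
  constructor
  · exact one_div_le_one_div_of_le (by linarith) (by linarith)
  · have heq : 1 / (1 - b) - 1 / (1 - a) = (b - a) / ((1 - a) * (1 - b)) := by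
      rw [div_sub_div _ _ (by linarith : (1:ℝ)-b ≠ 0) (by linarith : (1:ℝ)-a ≠ 0)]
      rw [div_eq_div_iff (by nlinarith) (by nlinarith)]
      ring
    rw [heq]
    exact div_le_self (by linarith) (by nlinarith)

end ParetoAux

/-- Uniform weak law of large numbers for the class {y ↦ y^θ : θ ∈ [θ₀,0]}
with i.i.d. Pareto(1) variables:
sup_{θ ∈ [θ₀,0]} |k⁻¹ Σ_{i<k} Yᵢ^θ - 1/(1-θ)| → 0 in probability. -/
theorem pareto_uniform_lln {Ω : Type*} [MeasurableSpace Ω]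
    (μ : Measure Ω) [IsProbabilityMeasure μ] (Y : ℕ → Ω → ℝ)
    (hmeas : ∀ i, Measurable (Y i))
    (hindep : iIndepFun Y μ)
    (hPareto : ∀ i, ∀ y : ℝ, 1 ≤ y → μ {ω | y < Y i ω} = ENNReal.ofReal (1 / y))
    (γ θ₀ : ℝ) (hγ : 0 < γ) (hθ₀ : θ₀ < 0) :
    ∀ ε > 0,
      Tendsto
        (fun k : ℕ =>
          μ {ω | ε ≤ ⨆ θ : Set.Icc θ₀ (0:ℝ),
              |(k : ℝ)⁻¹ * ∑ i ∈ Finset.range k, (Y i ω) ^ (θ : ℝ)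
                - 1 / (1 - (θ : ℝ))|})
        atTop (nhds 0) := by
  intro ε hε
  haveI : Nonempty (Set.Icc θ₀ (0:ℝ)) := (Set.nonempty_Icc.mpr hθ₀.le).to_subtype
  -- a.e. facts
  have hae1 : ∀ i, ∀ᵐ ω ∂μ, 1 < Y i ω := by
    intro i
    rw [ae_iff]
    have hms : MeasurableSet {ω | 1 < Y i ω} := measurableSet_lt measurable_const (hmeas i)
    have h1 : μ {ω | 1 < Y i ω} = 1 := by rw [hPareto i 1 le_rfl]; simp
    have h2 : {ω | ¬ 1 < Y i ω} = {ω | 1 < Y i ω}ᶜ := rfl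
    rw [h2, measure_compl hms (measure_ne_top _ _), h1, measure_univ, tsub_self]
  have hG : ∀ᵐ ω ∂μ, ∀ i, 1 < Y i ω := ae_all_iff.mpr hae1
  have hmap : ∀ i, μ.map (Y i) = paretoLaw := fun i =>
    map_eq_paretoLaw μ (Y i) (hmeas i) (hPareto i)
  have hxt : ∀ t : ℝ, Measurable fun x : ℝ => x ^ t := by
    intro t; measurability
  have hint : ∀ t : ℝ, t ≤ 0 → Integrable (fun ω => Y 0 ω ^ t) μ := by
    intro t ht
    refine Integrable.mono' (integrable_const 1)
      (((hxt t).comp (hmeas 0)).aestronglyMeasurable) ?_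
    filter_upwards [hae1 0] with ω hω
    rw [Real.norm_eq_abs, abs_of_nonneg (Real.rpow_nonneg (by linarith) _)]
    exact Real.rpow_le_one_of_one_le_of_nonpos hω.le ht
  have hexp : ∀ t : ℝ, t ≤ 0 → ∫ ω, Y 0 ω ^ t ∂μ = 1 / (1 - t) := by
    intro t ht
    have h1 : ∫ ω, Y 0 ω ^ t ∂μ = ∫ x, x ^ t ∂(μ.map (Y 0)) :=
      (integral_map (hmeas 0).aemeasurable ((hxt t).aestronglyMeasurable)).symm
    rw [h1, hmap 0, paretoLaw_integral t ht]
  -- strong law at each point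
  have hsl : ∀ t : ℝ, t ≤ 0 → ∀ᵐ ω ∂μ,
      Tendsto (fun k : ℕ => (k:ℝ)⁻¹ * ∑ i ∈ Finset.range k, Y i ω ^ t)
        atTop (nhds (1/(1-t))) := by
    intro t ht
    have hident : ∀ i, IdentDistrib (fun ω => Y i ω ^ t) (fun ω => Y 0 ω ^ t) μ μ := by
      intro i
      exact IdentDistrib.comp
        ⟨(hmeas i).aemeasurable, (hmeas 0).aemeasurable, by rw [hmap i, hmap 0]⟩ (hxt t)
    have hpind : Pairwise (Function.onFun (IndepFun · · μ) fun i ω => Y i ω ^ t) := by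
      intro i j hij
      exact (hindep.indepFun hij).comp (hxt t) (hxt t)
    have hSL := ProbabilityTheory.strong_law_ae _ (hint t ht) hpind hident
    filter_upwards [hSL] with ω hω
    rw [← hexp t ht]
    simpa [smul_eq_mul] using hω
  -- tendsto in measure at each point
  have htim : ∀ t : ℝ, t ≤ 0 → Tendsto (fun k : ℕ =>
      μ {ω | ε/3 ≤ |(k:ℝ)⁻¹ * ∑ i ∈ Finset.range k, Y i ω ^ t - 1/(1-t)|})
      atTop (nhds 0) := by
    intro t ht
    have hmk : ∀ k : ℕ, AEStronglyMeasurable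
        (fun ω => (k:ℝ)⁻¹ * ∑ i ∈ Finset.range k, Y i ω ^ t) μ := fun k =>
      (measurable_const.mul
        (Finset.measurable_sum _ fun i _ => (hxt t).comp (hmeas i))).aestronglyMeasurable
    have h3 := (MeasureTheory.tendstoInMeasure_iff_dist.mp
        (MeasureTheory.tendstoInMeasure_of_tendsto_ae hmk (hsl t ht))) (ε/3)
      (by linarith)
    simpa [Real.dist_eq] using h3
  -- grid
  set N : ℕ := ⌈(-θ₀) * 3 / ε⌉₊ + 1 with hNdef
  have hN1 : 1 ≤ N := Nat.le_add_left 1 _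
  have hNpos : (0:ℝ) < N := by positivity
  set h : ℝ := (-θ₀) / N with hhdef
  have hhpos : 0 < h := div_pos (by linarith) hNpos
  have hmesh : h ≤ ε / 3 := by
    rw [hhdef, div_le_iff₀ hNpos]
    have h1 : (-θ₀) * 3 / ε ≤ (N:ℝ) := by
      refine le_trans (Nat.le_ceil _) ?_
      exact_mod_cast Nat.le_succ _
    rw [div_le_iff₀ hε] at h1
    linarith
  have hTN : θ₀ + (N:ℝ) * h = 0 := by
    rw [hhdef]
    field_simp
    ring
  set T : ℕ → ℝ := fun j => θ₀ + j * h with hTdef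
  have hT0 : ∀ j : ℕ, j ≤ N → θ₀ ≤ T j ∧ T j ≤ 0 := by
    intro j hj
    constructor
    · have : (0:ℝ) ≤ j * h := by positivity
      simp only [hTdef]; linarith
    · have h1 : (j:ℝ) * h ≤ (N:ℝ) * h :=
        mul_le_mul_of_nonneg_right (by exact_mod_cast hj) hhpos.le
      simp only [hTdef]; linarith
  -- inclusion
  have hsub : ∀ k : ℕ,
      {ω | ε ≤ ⨆ θ : Set.Icc θ₀ (0:ℝ),
          |(k : ℝ)⁻¹ * ∑ i ∈ Finset.range k, (Y i ω) ^ (θ : ℝ) - 1 / (1 - (θ : ℝ))|}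
      ⊆ {ω | ¬ ∀ i, 1 < Y i ω} ∪
        ⋃ j ∈ Finset.range (N+1),
          {ω | ε/3 ≤ |(k:ℝ)⁻¹ * ∑ i ∈ Finset.range k, Y i ω ^ (T j) - 1/(1-(T j))|} := by
    intro k ω hω
    simp only [Set.mem_setOf_eq] at hω
    by_cases hωG : ∀ i, 1 < Y i ω
    · right
      by_contra hc
      simp only [Set.mem_iUnion, Finset.mem_range, Set.mem_setOf_eq, not_exists, not_le,
        exists_prop, not_and] at hc
      set F : ℝ → ℝ := fun s => (k:ℝ)⁻¹ * ∑ i ∈ Finset.range k, Y i ω ^ s with hFdef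
      have hFmono : ∀ s s' : ℝ, s ≤ s' → F s ≤ F s' := by
        intro s s' hss'
        refine mul_le_mul_of_nonneg_left (Finset.sum_le_sum fun i _ => ?_)
          (by positivity)
        exact Real.rpow_le_rpow_of_exponent_le (hωG i).le hss'
      have key : ∀ θ : Set.Icc θ₀ (0:ℝ),
          |F (θ:ℝ) - 1/(1-(θ:ℝ))| ≤ 2*ε/3 := by
        intro θ
        have hθ1 : θ₀ ≤ (θ:ℝ) := θ.2.1
        have hθ2 : (θ:ℝ) ≤ 0 := θ.2.2
        obtain ⟨j, hjN, hj1, hj2⟩ := grid_cover θ₀ h hhpos N hN1 (θ:ℝ) hθ1 (by linarith)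
        have hTj : T j ≤ (θ:ℝ) := hj1
        have hTj1 : (θ:ℝ) ≤ T (j+1) := by
          simp only [hTdef]
          push_cast
          push_cast at hj2
          linarith
        have hTj0 : T (j+1) ≤ 0 := (hT0 (j+1) hjN).2
        have hθ0 : (θ:ℝ) ≤ 0 := hθ2
        have hstep : T (j+1) - T j = h := by
          simp only [hTdef]; push_cast; ring
        have hA := hc j (by omega)
        have hB := hc (j+1) (by omega)
        rw [abs_lt] at hA hB
        have hL1 := m_lip (le_trans hTj hTj1) hTj0
        have hL2 := m_lip hTj hθ0
        have hL3 := m_lip hTj1 hTj0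
        have hF1 : F (T j) ≤ F (θ:ℝ) := hFmono _ _ hTj
        have hF2 : F (θ:ℝ) ≤ F (T (j+1)) := hFmono _ _ hTj1
        have hA' : -(ε/3) < F (T j) - 1/(1-(T j)) ∧ F (T j) - 1/(1-(T j)) < ε/3 := hA
        have hB' : -(ε/3) < F (T (j+1)) - 1/(1-(T (j+1)))
            ∧ F (T (j+1)) - 1/(1-(T (j+1))) < ε/3 := hB
        clear_value F T h
        rw [abs_le]
        refine ⟨?_, ?_⟩
        · linarith [hL3.1, hL1.2, hA'.1, hF1, hmesh, hstep]
        · linarith [hL2.1, hL1.2, hB'.2, hF2, hmesh, hstep]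
      have hle : (⨆ θ : Set.Icc θ₀ (0:ℝ),
          |F (θ:ℝ) - 1/(1-(θ:ℝ))|) ≤ 2*ε/3 := ciSup_le key
      have : ε ≤ 2*ε/3 := le_trans hω hle
      linarith
    · left; exact hωG
  -- measure bound
  have hGnull : μ {ω | ¬ ∀ i, 1 < Y i ω} = 0 := hG
  have hbound : ∀ k : ℕ,
      μ {ω | ε ≤ ⨆ θ : Set.Icc θ₀ (0:ℝ),
          |(k : ℝ)⁻¹ * ∑ i ∈ Finset.range k, (Y i ω) ^ (θ : ℝ) - 1 / (1 - (θ : ℝ))|}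
      ≤ ∑ j ∈ Finset.range (N+1),
          μ {ω | ε/3 ≤ |(k:ℝ)⁻¹ * ∑ i ∈ Finset.range k, Y i ω ^ (T j) - 1/(1-(T j))|} := by
    intro k
    calc μ _ ≤ μ ({ω | ¬ ∀ i, 1 < Y i ω} ∪
        ⋃ j ∈ Finset.range (N+1),
          {ω | ε/3 ≤ |(k:ℝ)⁻¹ * ∑ i ∈ Finset.range k, Y i ω ^ (T j) - 1/(1-(T j))|}) :=
          measure_mono (hsub k)
      _ ≤ μ {ω | ¬ ∀ i, 1 < Y i ω} + μ (⋃ j ∈ Finset.range (N+1),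
          {ω | ε/3 ≤ |(k:ℝ)⁻¹ * ∑ i ∈ Finset.range k, Y i ω ^ (T j) - 1/(1-(T j))|}) :=
          measure_union_le _ _
      _ = μ (⋃ j ∈ Finset.range (N+1),
          {ω | ε/3 ≤ |(k:ℝ)⁻¹ * ∑ i ∈ Finset.range k, Y i ω ^ (T j) - 1/(1-(T j))|}) := by
          rw [hGnull, zero_add]
      _ ≤ ∑ j ∈ Finset.range (N+1),
          μ {ω | ε/3 ≤ |(k:ℝ)⁻¹ * ∑ i ∈ Finset.range k, Y i ω ^ (T j) - 1/(1-(T j))|} :=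
          measure_biUnion_finset_le _ _
  have hsum : Tendsto (fun k : ℕ => ∑ j ∈ Finset.range (N+1),
      μ {ω | ε/3 ≤ |(k:ℝ)⁻¹ * ∑ i ∈ Finset.range k, Y i ω ^ (T j) - 1/(1-(T j))|})
      atTop (nhds 0) := by
    have := tendsto_finset_sum (Finset.range (N+1))
      (fun j hj => htim (T j) (hT0 j (Nat.lt_succ_iff.mp (Finset.mem_range.mp hj))).2)
    simpa using this
  exact tendsto_of_tendsto_of_tendsto_of_le_of_le tendsto_const_nhds hsum
    (fun k => zero_le) hbound
end
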